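/- Let P be a set of 'points' and P* a set of 'lines' with |P*| > 1, with an incidence relation such that: every line is incident with exactly 3 points; any two distinct points are incident with a unique common line; any two distinct lines are incident with a unique common point. Then |P| = 7. -/

import Mathlib

/-- In an abstract incidence structure where every line is incident with exactly
three points, two distinct points lie on a unique common line, two distinct lines
meet in a unique common point, and there are at least two lines, the set of points
has cardinality 7. -/
theorem stmt_2 (P L : Type*) (I : P → L → Prop)
    (h3 : ∀ l : L, {p : P | I p l}.ncard = 3)
    (hpp : ∀ p q : P, p ≠ q → ∃! l : L, I p l ∧ I q l)
    (hll : ∀ l m : L, l ≠ m → ∃! p : P, I p l ∧ I p m)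
    (hL : ∃ l m : L, l ≠ m) :
    Nat.card P = 7 := by
  obtain ⟨l, m, hlm⟩ := hL
  obtain ⟨x, ⟨hxl, hxm⟩, hxuniq⟩ := hll l m hlm
  obtain ⟨a, hal, hax⟩ := Set.exists_ne_of_one_lt_ncard (by rw [h3 l]; norm_num) x
  have ham : ¬ I a m := fun h => hax (hxuniq a ⟨hal, h⟩)
  obtain ⟨q1, q2, q3, h12, h13, h23, hM⟩ := Set.ncard_eq_three.mp (h3 m)
  have hq1m : I q1 m := by have : q1 ∈ {p | I p m} := hM ▸ (by simp); exact this
  have hq2m : I q2 m := by have : q2 ∈ {p | I p m} := hM ▸ (by simp); exact this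
  have hq3m : I q3 m := by have : q3 ∈ {p | I p m} := hM ▸ (by simp); exact this
  have hqa : ∀ q : P, I q m → a ≠ q := fun q hq he => ham (he ▸ hq)
  obtain ⟨l1, ⟨hal1, hq1l1⟩, hu1⟩ := hpp a q1 (hqa q1 hq1m)
  obtain ⟨l2, ⟨hal2, hq2l2⟩, hu2⟩ := hpp a q2 (hqa q2 hq2m)
  obtain ⟨l3, ⟨hal3, hq3l3⟩, hu3⟩ := hpp a q3 (hqa q3 hq3m)
  -- the three lines are pairwise "independent": the sets minus a are disjoint
  have hdisj : ∀ (q q' : P) (lq lq' : L), q ≠ q' → I q m → I q' m →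
      I a lq → I q lq → I a lq' → I q' lq' →
      Disjoint ({p | I p lq} \ {a}) ({p | I p lq'} \ {a}) := by
    intro q q' lq lq' hqq' hqm hq'm halq hqlq halq' hq'lq'
    rw [Set.disjoint_left]
    rintro p ⟨hp1, hpa⟩ ⟨hp2, -⟩
    have hap : a ≠ p := fun h => hpa (by simp [h.symm])
    obtain ⟨n, -, hun⟩ := hpp a p hap
    have he : lq = lq' := by
      rw [hun lq ⟨halq, hp1⟩, hun lq' ⟨halq', hp2⟩]
    have hlqm : lq ≠ m := fun h => ham (h ▸ halq)
    obtain ⟨y, -, hyu⟩ := hll lq m hlqm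
    exact hqq' ((hyu q ⟨hqlq, hqm⟩).trans (hyu q' ⟨he ▸ hq'lq', hq'm⟩).symm)
  -- covering
  have cover : (Set.univ : Set P) =
      insert a ((({p | I p l1} \ {a}) ∪ ({p | I p l2} \ {a})) ∪ ({p | I p l3} \ {a})) := by
    ext p
    simp only [Set.mem_univ, Set.mem_insert_iff, Set.mem_union, Set.mem_diff,
      Set.mem_setOf_eq, Set.mem_singleton_iff, true_iff]
    by_cases hpa : p = a
    · exact Or.inl hpa
    · right
      obtain ⟨n, ⟨han, hpn⟩, -⟩ := hpp a p (fun h => hpa h.symm)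
      have hnm : n ≠ m := fun h => ham (h ▸ han)
      obtain ⟨q, ⟨hqn, hqm⟩, -⟩ := hll n m hnm
      have hq : q ∈ ({q1, q2, q3} : Set P) := hM ▸ hqm
      have key : ∀ (qi : P) (li : L), q = qi → I a li → I qi li →
          (∀ y, I a y ∧ I qi y → y = li) → I p li := by
        intro qi li hqi hali hqili hui
        have : n = li := hui n ⟨han, hqi ▸ hqn⟩
        exact this ▸ hpn
      rcases hq with h | h | h
      · exact Or.inl (Or.inl ⟨key q1 l1 h hal1 hq1l1 hu1, hpa⟩)
      · exact Or.inl (Or.inr ⟨key q2 l2 h hal2 hq2l2 hu2, hpa⟩)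
      · exact Or.inr ⟨key q3 l3 h hal3 hq3l3 hu3, hpa⟩
  -- finiteness and counting
  have hfinS : ∀ li : L, ({p | I p li}).Finite := fun li =>
    Set.finite_of_ncard_ne_zero (by rw [h3 li]; norm_num)
  have hfin : ∀ li : L, ({p | I p li} \ {a}).Finite := fun li => (hfinS li).diff
  have hcard : ∀ li : L, I a li → ({p | I p li} \ {a}).ncard = 2 := by
    intro li hali
    have hmem : a ∈ {p | I p li} := hali
    rw [Set.ncard_diff_singleton_of_mem hmem, h3 li]
  have hd12 := hdisj q1 q2 l1 l2 h12 hq1m hq2m hal1 hq1l1 hal2 hq2l2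
  have hd13 := hdisj q1 q3 l1 l3 h13 hq1m hq3m hal1 hq1l1 hal3 hq3l3
  have hd23 := hdisj q2 q3 l2 l3 h23 hq2m hq3m hal2 hq2l2 hal3 hq3l3
  have hna : a ∉ (({p | I p l1} \ {a}) ∪ ({p | I p l2} \ {a})) ∪ ({p | I p l3} \ {a}) := by
    simp
  rw [← Set.ncard_univ, cover,
    Set.ncard_insert_of_notMem hna (((hfin l1).union (hfin l2)).union (hfin l3)),
    Set.ncard_union_eq (Disjoint.union_left hd13 hd23) ((hfin l1).union (hfin l2)) (hfin l3),
    Set.ncard_union_eq hd12 (hfin l1) (hfin l2),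
    hcard l1 hal1, hcard l2 hal2, hcard l3 hal3]
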